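/- Let p ∈ 2ℕ* and let A : Y → L^p(μ), B : Y → L^p(ν) be bounded linear maps on a Banach space Y such that ‖ζ‖_Y := ‖Aζ‖_{L^p(μ)} + ‖Bζ‖_{L^p(ν)} is a norm on Y. For bounded linear functionals ℓ₁, ℓ₂ on Y, let ζ̄₁, ζ̄₂ be the respective minimizers of J_i(ζ) = (1/p)‖Aζ‖^p_{L^p(μ)} + (1/p)‖Bζ‖^p_{L^p(ν)} − ℓ_i(ζ). Then ‖ζ̄₁ − ζ̄₂‖_Y^p ≤ C‖ℓ₁ − ℓ₂‖_{Y*}^{p'}, i.e. the minimizer depends (1/(p−1))-Hölder continuously on the data. -/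

import Mathlib

open MeasureTheory

/-- Pointwise Clarkson inequality for even exponents. -/
lemma clarkson_real (m : ℕ) (hm : m ≠ 0) (a b : ℝ) :
    2 * ((a + b) ^ (2 * m) + (a - b) ^ (2 * m)) ≤ 2 ^ (2 * m) * (a ^ (2 * m) + b ^ (2 * m)) := by
  obtain ⟨k, rfl⟩ := Nat.exists_eq_succ_of_ne_zero hm
  have h1 : (a + b) ^ (2 * (k + 1)) + (a - b) ^ (2 * (k + 1))
      = ((a + b) ^ 2) ^ (k + 1) + ((a - b) ^ 2) ^ (k + 1) := by
    rw [pow_mul, pow_mul]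
  have h2 : ((a + b) ^ 2) ^ (k + 1) + ((a - b) ^ 2) ^ (k + 1)
      ≤ ((a + b) ^ 2 + (a - b) ^ 2) ^ (k + 1) :=
    pow_add_pow_le (sq_nonneg _) (sq_nonneg _) (Nat.succ_ne_zero _)
  have h3 : (a + b) ^ 2 + (a - b) ^ 2 = 2 * (a ^ 2 + b ^ 2) := by ring
  have h4 : (a ^ 2 + b ^ 2) ^ (k + 1) ≤ 2 ^ k * ((a ^ 2) ^ (k + 1) + (b ^ 2) ^ (k + 1)) := by
    simpa using add_pow_le (sq_nonneg a) (sq_nonneg b) (k + 1)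
  have h5 : ((a ^ 2) ^ (k + 1) : ℝ) = a ^ (2 * (k + 1)) := by rw [← pow_mul]
  have h6 : ((b ^ 2) ^ (k + 1) : ℝ) = b ^ (2 * (k + 1)) := by rw [← pow_mul]
  have hpow : (2 : ℝ) ^ (2 * (k + 1)) = 2 * (2 ^ (k + 1) * 2 ^ k) := by ring
  calc 2 * ((a + b) ^ (2 * (k + 1)) + (a - b) ^ (2 * (k + 1)))
      ≤ 2 * ((a + b) ^ 2 + (a - b) ^ 2) ^ (k + 1) := by rw [h1]; linarith
    _ = 2 * (2 ^ (k + 1) * (a ^ 2 + b ^ 2) ^ (k + 1)) := by rw [h3, mul_pow]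
    _ ≤ 2 * (2 ^ (k + 1) * (2 ^ k * ((a ^ 2) ^ (k + 1) + (b ^ 2) ^ (k + 1)))) := by
        have : (0:ℝ) ≤ 2 ^ (k+1) := by positivity
        nlinarith [h4]
    _ = 2 ^ (2 * (k + 1)) * (a ^ (2 * (k + 1)) + b ^ (2 * (k + 1))) := by
        rw [h5, h6, hpow]; ring

/-- The `p`-th power of the `L^p` norm as an integral. -/
lemma Lp_norm_pow {α : Type*} [MeasurableSpace α] {μ : Measure α} (p : ℕ) (hp : 0 < p)
    [Fact (1 ≤ (p : ENNReal))] (f : Lp ℝ (p : ENNReal) μ) :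
    ‖f‖ ^ p = ∫ a, |f a| ^ p ∂μ := by
  have hp0 : ((p : ℕ) : ENNReal) ≠ 0 := by exact_mod_cast hp.ne'
  have hpt : ((p : ℕ) : ENNReal) ≠ ⊤ := ENNReal.natCast_ne_top p
  have hm := Lp.memLp f
  have h := hm.eLpNorm_eq_integral_rpow_norm hp0 hpt
  have htr : ((p : ℕ) : ENNReal).toReal = (p : ℝ) := by simp
  have hint : ∫ a, ‖f a‖ ^ (((p : ℕ) : ENNReal)).toReal ∂μ = ∫ a, |f a| ^ p ∂μ := by
    rw [htr]
    congr 1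
    ext a
    rw [Real.rpow_natCast, Real.norm_eq_abs]
  have hnn : 0 ≤ ∫ a, |f a| ^ p ∂μ := integral_nonneg fun a => by positivity
  rw [Lp.norm_def, h, hint, ENNReal.toReal_ofReal (Real.rpow_nonneg hnn _)]
  rw [← Real.rpow_natCast ((∫ a, |f a| ^ p ∂μ) ^ (((p:ℕ):ENNReal)).toReal⁻¹) p,
    ← Real.rpow_mul hnn, htr,
    inv_mul_cancel₀ (by exact_mod_cast hp.ne' : (p:ℝ) ≠ 0), Real.rpow_one]

lemma Lp_integrable_pow {α : Type*} [MeasurableSpace α] {μ : Measure α} (p : ℕ) (hp : 0 < p)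
    [Fact (1 ≤ (p : ENNReal))] (f : Lp ℝ (p : ENNReal) μ) :
    Integrable (fun a => |f a| ^ p) μ := by
  have hp0 : ((p : ℕ) : ENNReal) ≠ 0 := by exact_mod_cast hp.ne'
  have hpt : ((p : ℕ) : ENNReal) ≠ ⊤ := ENNReal.natCast_ne_top p
  have := (Lp.memLp f).integrable_norm_rpow hp0 hpt
  simpa [Real.rpow_natCast, Real.norm_eq_abs] using this

/-- Clarkson's first inequality in `L^p` for even `p ≥ 2`. -/
lemma clarkson_Lp {α : Type*} [MeasurableSpace α] {μ : Measure α} (p : ℕ)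
    (hpeven : Even p) (hp2 : 2 ≤ p) [Fact (1 ≤ (p : ENNReal))]
    (f g : Lp ℝ (p : ENNReal) μ) :
    2 * (‖f + g‖ ^ p + ‖f - g‖ ^ p) ≤ 2 ^ p * (‖f‖ ^ p + ‖g‖ ^ p) := by
  obtain ⟨m, hm⟩ := hpeven
  have hpm : p = 2 * m := by omega
  have hm0 : m ≠ 0 := by omega
  have hp : 0 < p := by omega
  have hintf := Lp_integrable_pow p hp f
  have hintg := Lp_integrable_pow p hp g
  have hintfg := Lp_integrable_pow p hp (f + g)
  have hintfg' := Lp_integrable_pow p hp (f - g)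
  rw [Lp_norm_pow p hp, Lp_norm_pow p hp, Lp_norm_pow p hp, Lp_norm_pow p hp]
  have key : ∫ a, (|(f + g : Lp ℝ (p:ENNReal) μ) a| ^ p + |(f - g : Lp ℝ (p:ENNReal) μ) a| ^ p) ∂μ
      ≤ ∫ a, (2:ℝ) ^ p / 2 * (|f a| ^ p + |g a| ^ p) ∂μ := by
    refine integral_mono_ae (hintfg.add hintfg') (((hintf.add hintg).const_mul _)) ?_
    filter_upwards [Lp.coeFn_add f g, Lp.coeFn_sub f g] with a ha hs
    rw [ha, hs]
    have h := clarkson_real m hm0 (f a) (g a)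
    rw [← hpm] at h
    have hev : Even p := ⟨m, hm⟩
    have h1 := hev.pow_abs (f a + g a)
    have h2 := hev.pow_abs (f a - g a)
    have h3 := hev.pow_abs (f a)
    have h4 := hev.pow_abs (g a)
    simp only [Pi.add_apply, Pi.sub_apply, h1, h2, h3, h4]
    linarith
  rw [integral_add hintfg hintfg', integral_const_mul _ _, integral_add hintf hintg] at key
  have hE : (0:ℝ) < 2 ^ p := by positivity
  linarith

set_option maxHeartbeats 1000000 in
/-- Hölder stability of the minimizer of the penalized HUM functional with
respect to the linear data: `‖ζ̄₁ − ζ̄₂‖^p ≤ C‖ℓ₁ − ℓ₂‖^{p'}`. -/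
theorem stmt17 (p : ℕ) (hpeven : Even p) (hp2 : 2 ≤ p)
    [Fact (1 ≤ (p : ENNReal))] :
    ∃ C : ℝ, 0 < C ∧
    ∀ (Y : Type) [NormedAddCommGroup Y] [NormedSpace ℝ Y] [CompleteSpace Y]
      (α β : Type) [MeasurableSpace α] [MeasurableSpace β]
      (μ : Measure α) (ν : Measure β) [SigmaFinite μ] [SigmaFinite ν]
      (A : Y →L[ℝ] Lp ℝ (p : ENNReal) μ) (B : Y →L[ℝ] Lp ℝ (p : ENNReal) ν)
      (ℓ₁ ℓ₂ : Y →L[ℝ] ℝ) (ζ₁ ζ₂ : Y),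
      (∀ ζ : Y, ‖ζ‖ = ‖A ζ‖ + ‖B ζ‖) →
      IsMinOn (fun ζ : Y => (1 / p : ℝ) * ‖A ζ‖ ^ p + (1 / p : ℝ) * ‖B ζ‖ ^ p - ℓ₁ ζ)
        Set.univ ζ₁ →
      IsMinOn (fun ζ : Y => (1 / p : ℝ) * ‖A ζ‖ ^ p + (1 / p : ℝ) * ‖B ζ‖ ^ p - ℓ₂ ζ)
        Set.univ ζ₂ →
      ‖ζ₁ - ζ₂‖ ^ (p : ℝ) ≤ C * ‖ℓ₁ - ℓ₂‖ ^ ((p : ℝ) / ((p : ℝ) - 1)) := by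
  have hp0 : 0 < p := by omega
  have hpR : (2:ℝ) ≤ (p:ℝ) := by exact_mod_cast hp2
  have hp0R : (0:ℝ) < (p:ℝ) := by linarith
  set E : ℝ := 2 ^ p with hEdef
  have hE : (0:ℝ) < E := by positivity
  have hE1 : (1:ℝ) ≤ E := one_le_pow₀ (by norm_num)
  set K : ℝ := (p:ℝ) * E ^ 2 / 8 with hKdef
  have hK1 : (1:ℝ) ≤ K := by
    rw [hKdef, hEdef]
    have h4 : (4:ℝ) ≤ 2 ^ p := by
      calc (4:ℝ) = 2 ^ 2 := by norm_num
        _ ≤ 2 ^ p := pow_le_pow_right₀ (by norm_num) hp2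
    nlinarith
  have hK0 : (0:ℝ) < K := by linarith
  refine ⟨K ^ 2, by positivity, ?_⟩
  intro Y _ _ _ α β _ _ μ ν _ _ A B ℓ₁ ℓ₂ ζ₁ ζ₂ hnorm h1 h2
  set mζ : Y := (2⁻¹ : ℝ) • (ζ₁ + ζ₂) with hmdef
  set a1 : ℝ := ‖A ζ₁‖
  set a2 : ℝ := ‖A ζ₂‖
  set am : ℝ := ‖A mζ‖
  set ad : ℝ := ‖A (ζ₁ - ζ₂)‖
  set b1 : ℝ := ‖B ζ₁‖
  set b2 : ℝ := ‖B ζ₂‖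
  set bm : ℝ := ‖B mζ‖
  set bd : ℝ := ‖B (ζ₁ - ζ₂)‖
  set s : ℝ := ‖ζ₁ - ζ₂‖ with hsdef
  set L : ℝ := ‖ℓ₁ - ℓ₂‖ with hLdef
  have hs0 : 0 ≤ s := norm_nonneg _
  have hL0 : 0 ≤ L := norm_nonneg _
  -- Clarkson applied to A and B
  have eA3 : ‖A (ζ₁ + ζ₂)‖ = 2 * am := by
    have h : A (ζ₁ + ζ₂) = (2:ℝ) • A mζ := by
      rw [hmdef, _root_.map_smul, smul_smul]; norm_num
    rw [h, norm_smul]; simp [am]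
  have eB3 : ‖B (ζ₁ + ζ₂)‖ = 2 * bm := by
    have h : B (ζ₁ + ζ₂) = (2:ℝ) • B mζ := by
      rw [hmdef, _root_.map_smul, smul_smul]; norm_num
    rw [h, norm_smul]; simp [bm]
  have hCA : 2 * ((2 * am) ^ p + ad ^ p) ≤ E * (a1 ^ p + a2 ^ p) := by
    have h := clarkson_Lp p hpeven hp2 (A ζ₁) (A ζ₂)
    rw [← map_add, ← map_sub, eA3] at h
    exact h
  have hCB : 2 * ((2 * bm) ^ p + bd ^ p) ≤ E * (b1 ^ p + b2 ^ p) := by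
    have h := clarkson_Lp p hpeven hp2 (B ζ₁) (B ζ₂)
    rw [← map_add, ← map_sub, eB3] at h
    exact h
  -- minimality at the midpoint
  have cancel : ∀ x : ℝ, (p:ℝ) * ((1/p : ℝ) * x) = x := fun x => by
    field_simp
  have hM1 : a1 ^ p + b1 ^ p - (p:ℝ) * ℓ₁ ζ₁ ≤ am ^ p + bm ^ p - (p:ℝ) * ℓ₁ mζ := by
    have h := mul_le_mul_of_nonneg_left (isMinOn_iff.mp h1 mζ (Set.mem_univ _)) hp0R.le
    rw [mul_sub, mul_sub, mul_add, mul_add, cancel, cancel, cancel, cancel] at h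
    exact h
  have hM2 : a2 ^ p + b2 ^ p - (p:ℝ) * ℓ₂ ζ₂ ≤ am ^ p + bm ^ p - (p:ℝ) * ℓ₂ mζ := by
    have h := mul_le_mul_of_nonneg_left (isMinOn_iff.mp h2 mζ (Set.mem_univ _)) hp0R.le
    rw [mul_sub, mul_sub, mul_add, mul_add, cancel, cancel, cancel, cancel] at h
    exact h
  -- the linear term
  have hℓ : ℓ₁ ζ₁ + ℓ₂ ζ₂ - ℓ₁ mζ - ℓ₂ mζ = (ℓ₁ - ℓ₂) ((2⁻¹:ℝ) • (ζ₁ - ζ₂)) := by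
    simp only [hmdef, ContinuousLinearMap.sub_apply, _root_.map_smul, map_add, map_sub,
      smul_eq_mul]
    ring
  have hℓ2 : (ℓ₁ - ℓ₂) ((2⁻¹:ℝ) • (ζ₁ - ζ₂)) ≤ L * (s / 2) := by
    calc (ℓ₁ - ℓ₂) ((2⁻¹:ℝ) • (ζ₁ - ζ₂)) ≤ ‖(ℓ₁ - ℓ₂) ((2⁻¹:ℝ) • (ζ₁ - ζ₂))‖ :=
          le_abs_self _
      _ ≤ ‖ℓ₁ - ℓ₂‖ * ‖(2⁻¹:ℝ) • (ζ₁ - ζ₂)‖ := (ℓ₁ - ℓ₂).le_opNorm _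
      _ = L * (s / 2) := by
          rw [norm_smul, Real.norm_eq_abs, abs_of_pos (by norm_num : (0:ℝ) < 2⁻¹)]
          rw [← hsdef, ← hLdef]; ring
  -- comparison of norms
  have hS : 2 * s ^ p ≤ E * (ad ^ p + bd ^ p) := by
    have hsd : s = ad + bd := hnorm (ζ₁ - ζ₂)
    have h := Even.add_pow_le (a := ad) (b := bd) hpeven
    have h2p : (2:ℝ) * 2 ^ (p - 1) = 2 ^ p := by
      have hpp : p - 1 + 1 = p := by omega
      calc (2:ℝ) * 2 ^ (p - 1) = 2 ^ (p - 1 + 1) := by rw [pow_succ]; ring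
        _ = 2 ^ p := by rw [hpp]
    have h' := mul_le_mul_of_nonneg_left h (by norm_num : (0:ℝ) ≤ 2)
    rw [hsd, hEdef, ← h2p]
    linarith [h']
  -- combine everything: 8 s^p ≤ p E² L s
  have hbig : 8 * s ^ p ≤ (p:ℝ) * E ^ 2 * L * s := by
    have hsum : a1 ^ p + a2 ^ p + b1 ^ p + b2 ^ p - 2 * am ^ p - 2 * bm ^ p
        ≤ (p:ℝ) * (L * (s / 2)) := by
      have hl : (p:ℝ) * (ℓ₁ ζ₁ + ℓ₂ ζ₂ - ℓ₁ mζ - ℓ₂ mζ) ≤ (p:ℝ) * (L * (s / 2)) := by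
        rw [hℓ]; exact mul_le_mul_of_nonneg_left hℓ2 hp0R.le
      have hexp : (p:ℝ) * (ℓ₁ ζ₁ + ℓ₂ ζ₂ - ℓ₁ mζ - ℓ₂ mζ)
          = (p:ℝ) * ℓ₁ ζ₁ + (p:ℝ) * ℓ₂ ζ₂ - (p:ℝ) * ℓ₁ mζ - (p:ℝ) * ℓ₂ mζ := by ring
      rw [hexp] at hl
      linarith [hM1, hM2]
    have hEp : (2*am)^p = 2^p * am^p := by rw [mul_pow]
    have hEp' : (2*bm)^p = 2^p * bm^p := by rw [mul_pow]
    rw [hEp, ← hEdef] at hCA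
    rw [hEp', ← hEdef] at hCB
    have h1' : 2 * (ad ^ p + bd ^ p)
        ≤ E * (a1 ^ p + a2 ^ p + b1 ^ p + b2 ^ p - 2 * am ^ p - 2 * bm ^ p) := by
      have e1 : E * (a1 ^ p + a2 ^ p + b1 ^ p + b2 ^ p - 2 * am ^ p - 2 * bm ^ p)
          = (E * (a1 ^ p + a2 ^ p) - 2 * (E * am ^ p))
            + (E * (b1 ^ p + b2 ^ p) - 2 * (E * bm ^ p)) := by ring
      rw [e1]; linarith [hCA, hCB]
    have hm1 := mul_le_mul_of_nonneg_left h1' (by positivity : (0:ℝ) ≤ 2 * E)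
    have hm2 := mul_le_mul_of_nonneg_left hsum (by positivity : (0:ℝ) ≤ 2 * E ^ 2)
    linarith [hS, hm1, hm2]
  -- conclude with the Hölder exponent manipulation
  have hp1 : (0:ℝ) < (p:ℝ) - 1 := by linarith
  set q : ℝ := (p:ℝ) / ((p:ℝ) - 1) with hqdef
  have hq0 : 0 ≤ q := by positivity
  have hq2 : q ≤ 2 := by rw [hqdef, div_le_iff₀ hp1]; linarith
  rcases eq_or_lt_of_le hs0 with hs | hs
  · rw [← hs, Real.zero_rpow (by positivity : (p:ℝ) ≠ 0)]
    exact mul_nonneg (by positivity) (Real.rpow_nonneg hL0 _)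
  · have hstep : s ^ (p - 1) ≤ K * L := by
      have hsp : s ^ p = s ^ (p - 1) * s := by
        rw [← pow_succ]; congr 1; omega
      have h : s ^ (p - 1) * s ≤ (K * L) * s := by
        rw [← hsp, hKdef]; nlinarith [hbig]
      exact le_of_mul_le_mul_right h hs
    have hKL0 : 0 ≤ K * L := mul_nonneg hK0.le hL0
    have hrp : (s ^ (p - 1) : ℝ) ^ q ≤ (K * L) ^ q :=
      Real.rpow_le_rpow (by positivity) hstep hq0
    have hlhs : (s ^ (p - 1) : ℝ) ^ q = s ^ (p : ℝ) := by
      rw [← Real.rpow_natCast s (p - 1), ← Real.rpow_mul hs.le]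
      congr 1
      have hcast : ((p - 1 : ℕ) : ℝ) = (p:ℝ) - 1 := by
        have : 1 ≤ p := by omega
        push_cast [this]; ring
      rw [hcast, hqdef]
      field_simp
    have hrhs : (K * L) ^ q ≤ K ^ 2 * L ^ q := by
      rw [Real.mul_rpow hK0.le hL0]
      have hKq : K ^ q ≤ K ^ (2:ℝ) := Real.rpow_le_rpow_of_exponent_le hK1 hq2
      have hK2 : K ^ (2:ℝ) = K ^ (2:ℕ) := by
        rw [← Real.rpow_natCast K 2]; norm_num
      calc K ^ q * L ^ q ≤ K ^ (2:ℝ) * L ^ q :=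
            mul_le_mul_of_nonneg_right hKq (Real.rpow_nonneg hL0 _)
        _ = K ^ 2 * L ^ q := by rw [hK2]
    calc s ^ (p:ℝ) = (s ^ (p - 1) : ℝ) ^ q := hlhs.symm
      _ ≤ (K * L) ^ q := hrp
      _ ≤ K ^ 2 * L ^ q := hrhs
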